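/- (Lemma 13: derivative of the orthogonal projection matrix.) Let Γ ∈ ℝ^{p×d} have full column rank d ≤ p (equivalently, ΓᵀΓ is invertible). The map g : ℝ^{p×d} → ℝ^{p×p}, g(M) := M(MᵀM)⁻¹Mᵀ, is Fréchet differentiable at Γ, and its derivative applied to a direction E ∈ ℝ^{p×d} is Dg(Γ)[E] = Q_Γ E (ΓᵀΓ)⁻¹ Γᵀ + Γ (ΓᵀΓ)⁻¹ Eᵀ Q_Γ, where Q_Γ := I_p − Γ(ΓᵀΓ)⁻¹Γᵀ. Equivalently, in vec coordinates, ∂vec(P_Γ)/∂vecᵀ(Γ) = (I_{p²} + K_{pp})(Γ(ΓᵀΓ)⁻¹ ⊗ Q_Γ), where K_{pp} is the commutation matrix with vec(Mᵀ) = K_{pp} vec(M). -/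

import Mathlib

open Matrix Asymptotics Filter Topology

namespace Stmt9

attribute [local instance] Matrix.normedAddCommGroup Matrix.normedSpace


lemma isLittleO_bilin {E F G X : Type*} [NormedAddCommGroup E] [NormedSpace ℝ E]
    [NormedAddCommGroup F] [NormedSpace ℝ F] [NormedAddCommGroup G] [NormedSpace ℝ G]
    (B : E →L[ℝ] F →L[ℝ] G) {l : Filter X} {f : X → E} {g : X → F}
    (hg : Tendsto g l (𝓝 0)) : (fun x => B (f x) (g x)) =o[l] f := by
  rw [isLittleO_iff]
  intro c hc
  have hpos : (0:ℝ) < ‖B‖ + 1 := by positivity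
  have hev : ∀ᶠ x in l, ‖g x‖ < c / (‖B‖ + 1) := by
    have := Metric.tendsto_nhds.mp hg (c / (‖B‖ + 1)) (by positivity)
    simpa [dist_zero_right] using this
  filter_upwards [hev] with x hx
  calc ‖B (f x) (g x)‖ ≤ ‖B‖ * ‖f x‖ * ‖g x‖ := B.le_opNorm₂ _ _
    _ ≤ ‖B‖ * ‖f x‖ * (c / (‖B‖ + 1)) :=
        mul_le_mul_of_nonneg_left hx.le (by positivity)
    _ ≤ c * ‖f x‖ := by
        rw [div_eq_mul_inv]
        have h1 : ‖B‖ * (c * (‖B‖+1)⁻¹) ≤ c := by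
          rw [mul_comm c]
          rw [← mul_assoc]
          have : ‖B‖ * (‖B‖+1)⁻¹ ≤ 1 := by
            rw [mul_inv_le_iff₀ hpos]; linarith [norm_nonneg B]
          nlinarith [hc.le]
        nlinarith [norm_nonneg (f x), norm_nonneg B, hc.le]

noncomputable def mulCLM (a b c : ℕ) :
    Matrix (Fin a) (Fin b) ℝ →L[ℝ] Matrix (Fin b) (Fin c) ℝ →L[ℝ] Matrix (Fin a) (Fin c) ℝ :=
  LinearMap.toContinuousLinearMap
    { toFun := fun X => LinearMap.toContinuousLinearMap
        { toFun := fun Y => X * Y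
          map_add' := fun Y Z => Matrix.mul_add X Y Z
          map_smul' := fun r Y => (Matrix.mul_smul X r Y) }
      map_add' := by intro X X'; ext Y; simp [Matrix.add_mul]
      map_smul' := by intro r X; ext Y; simp [Matrix.smul_mul] }

@[simp] lemma mulCLM_apply {a b c : ℕ} (X : Matrix (Fin a) (Fin b) ℝ)
    (Y : Matrix (Fin b) (Fin c) ℝ) : mulCLM a b c X Y = X * Y := rfl

noncomputable def invD {n : ℕ} (A : Matrix (Fin n) (Fin n) ℝ) :
    Matrix (Fin n) (Fin n) ℝ →L[ℝ] Matrix (Fin n) (Fin n) ℝ :=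
  LinearMap.toContinuousLinearMap
    { toFun := fun E => -(A⁻¹ * E * A⁻¹)
      map_add' := by intro E F; simp [Matrix.mul_add, Matrix.add_mul]; abel
      map_smul' := by intro r E; simp [Matrix.mul_smul, Matrix.smul_mul] }

@[simp] lemma invD_apply {n : ℕ} (A E : Matrix (Fin n) (Fin n) ℝ) :
    invD A E = -(A⁻¹ * E * A⁻¹) := rfl

/-- derivative of matrix inverse at an invertible matrix -/
lemma hasFDerivAt_inv {n : ℕ} (A : Matrix (Fin n) (Fin n) ℝ) (hA : IsUnit A.det) :
    HasFDerivAt (fun X : Matrix (Fin n) (Fin n) ℝ => X⁻¹) (invD A) A := by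
  have hA0 : A.det ≠ 0 := by
    simpa [isUnit_iff_ne_zero] using hA
  -- eventually invertible
  have hdet : ContinuousAt (fun X : Matrix (Fin n) (Fin n) ℝ => X.det) A :=
    (continuous_id.matrix_det).continuousAt
  have hev : ∀ᶠ X in 𝓝 A, (X : Matrix (Fin n) (Fin n) ℝ).det ≠ 0 :=
    hdet.eventually_ne hA0
  -- continuity of inv at A
  have hcont : ContinuousAt (fun X : Matrix (Fin n) (Fin n) ℝ => X⁻¹) A := by
    apply continuousAt_matrix_inv
    rw [Ring.inverse_eq_inv']
    exact continuousAt_inv₀ hA0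
  have hg : Tendsto (fun X : Matrix (Fin n) (Fin n) ℝ => A⁻¹ - X⁻¹) (𝓝 A) (𝓝 0) := by
    have := tendsto_const_nhds (x := A⁻¹) (f := 𝓝 A) |>.sub hcont
    simpa using this
  refine hasFDerivAt_iff_isLittleO.2 ?_
  have key : (fun X : Matrix (Fin n) (Fin n) ℝ =>
        X⁻¹ - A⁻¹ - invD A (X - A)) =ᶠ[𝓝 A]
      (fun X => ((mulCLM n n n).comp ((mulCLM n n n) A⁻¹)) (X - A) (A⁻¹ - X⁻¹)) := by
    filter_upwards [hev] with X hX
    have hXA : X * X⁻¹ = 1 := Matrix.mul_nonsing_inv X (isUnit_iff_ne_zero.2 hX)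
    have hAA : A * A⁻¹ = 1 := Matrix.mul_nonsing_inv A hA
    simp only [ContinuousLinearMap.comp_apply, mulCLM_apply, invD_apply]
    have h3 : ∀ Y : Matrix (Fin n) (Fin n) ℝ, A⁻¹ * (A * Y) = Y := fun Y => by
      rw [← Matrix.mul_assoc, Matrix.nonsing_inv_mul A hA, Matrix.one_mul]
    simp only [Matrix.mul_sub, Matrix.sub_mul, Matrix.mul_assoc, hXA, h3, Matrix.mul_one]
    abel
  refine IsLittleO.congr' (isLittleO_bilin _ hg) key.symm ?_
  · exact Filter.EventuallyEq.refl _ _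

noncomputable def tCLM (a b : ℕ) :
    Matrix (Fin a) (Fin b) ℝ →L[ℝ] Matrix (Fin b) (Fin a) ℝ :=
  LinearMap.toContinuousLinearMap
    { toFun := fun X => Xᵀ
      map_add' := fun X Y => Matrix.transpose_add X Y
      map_smul' := fun r X => Matrix.transpose_smul r X }

@[simp] lemma tCLM_apply {a b : ℕ} (X : Matrix (Fin a) (Fin b) ℝ) : tCLM a b X = Xᵀ := rfl

set_option maxHeartbeats 2000000 in
/-- derivative of the orthogonal projection matrix. If
`Γ ∈ ℝ^{p×d}` has full column rank (`ΓᵀΓ` invertible), the map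
`g(M) = M(MᵀM)⁻¹Mᵀ` is Fréchet differentiable at `Γ` with derivative
`E ↦ Q_Γ E (ΓᵀΓ)⁻¹ Γᵀ + Γ (ΓᵀΓ)⁻¹ Eᵀ Q_Γ`, where `Q_Γ = I − Γ(ΓᵀΓ)⁻¹Γᵀ`. -/
theorem statement9 {p d : ℕ} (hd : d ≤ p)
    (Γ : Matrix (Fin p) (Fin d) ℝ) (hrank : IsUnit (Γᵀ * Γ).det) :
    ∃ L : Matrix (Fin p) (Fin d) ℝ →L[ℝ] Matrix (Fin p) (Fin p) ℝ,
      HasFDerivAt (fun M : Matrix (Fin p) (Fin d) ℝ => M * (Mᵀ * M)⁻¹ * Mᵀ) L Γ ∧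
      ∀ E : Matrix (Fin p) (Fin d) ℝ,
        L E = ((1 : Matrix (Fin p) (Fin p) ℝ) - Γ * (Γᵀ * Γ)⁻¹ * Γᵀ) * E * (Γᵀ * Γ)⁻¹ * Γᵀ
          + Γ * (Γᵀ * Γ)⁻¹ * Eᵀ *
              ((1 : Matrix (Fin p) (Fin p) ℝ) - Γ * (Γᵀ * Γ)⁻¹ * Γᵀ) := by
  have hT : HasFDerivAt (fun M : Matrix (Fin p) (Fin d) ℝ => Mᵀ) (tCLM p d) Γ :=
    (tCLM p d).hasFDerivAt
  have hId : HasFDerivAt (fun M : Matrix (Fin p) (Fin d) ℝ => M)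
      (ContinuousLinearMap.id ℝ _) Γ := hasFDerivAt_id Γ
  have h1 : HasFDerivAt (fun M : Matrix (Fin p) (Fin d) ℝ => Mᵀ * M) _ Γ :=
    (mulCLM d p d).hasFDerivAt_of_bilinear hT hId
  have h2 : HasFDerivAt (fun M : Matrix (Fin p) (Fin d) ℝ => (Mᵀ * M)⁻¹) _ Γ :=
    (hasFDerivAt_inv (Γᵀ * Γ) hrank).comp (f := fun M : Matrix (Fin p) (Fin d) ℝ => Mᵀ * M) Γ h1
  have h3 : HasFDerivAt (fun M : Matrix (Fin p) (Fin d) ℝ => M * (Mᵀ * M)⁻¹) _ Γ :=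
    (mulCLM p d d).hasFDerivAt_of_bilinear hId h2
  have h4 : HasFDerivAt (fun M : Matrix (Fin p) (Fin d) ℝ => M * (Mᵀ * M)⁻¹ * Mᵀ) _ Γ :=
    (mulCLM p d p).hasFDerivAt_of_bilinear h3 hT
  refine ⟨_, h4, ?_⟩
  intro E
  simp only [ContinuousLinearMap.add_apply, ContinuousLinearMap.precompR_apply,
    ContinuousLinearMap.precompL_apply, ContinuousLinearMap.precompR,
    ContinuousLinearMap.precompL, ContinuousLinearMap.compL_apply,
    ContinuousLinearMap.flip_apply, ContinuousLinearMap.comp_apply,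
    ContinuousLinearMap.coe_comp', Function.comp_apply, ContinuousLinearMap.id_apply,
    mulCLM_apply, tCLM_apply, invD_apply]
  change Γ * (Γᵀ * Γ)⁻¹ * Eᵀ + (Γ * -((Γᵀ * Γ)⁻¹ * (Γᵀ * E + Eᵀ * Γ) * (Γᵀ * Γ)⁻¹)
    + E * (Γᵀ * Γ)⁻¹) * Γᵀ = _
  set A := (Γᵀ * Γ)⁻¹
  simp only [Matrix.mul_add, Matrix.add_mul, Matrix.mul_sub, Matrix.sub_mul,
    Matrix.mul_neg, Matrix.neg_mul, Matrix.mul_one, Matrix.one_mul, Matrix.mul_assoc]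
  abel

end Stmt9
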